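/- Let a, a' be real numbers with 0 ≤ a ≤ a'. Then s(a') ≤ (1 + (a' − a)/2) · s(a). -/

import Mathlib

noncomputable def sigmoid (z : ℝ) : ℝ := 1 / (1 + Real.exp (-z))

lemma aux_key (u : ℝ) (h0 : 0 ≤ u) : (1 - u) * Real.exp (2 * u) ≤ 1 + u := by
  rcases le_or_gt u 1 with hu1 | hu1
  · have hb := Real.exp_bound' h0 hu1 (n := 4) (by norm_num)
    have hS : Real.exp u ≤ 1 + u + u ^ 2 / 2 + u ^ 3 / 6 + 5 * u ^ 4 / 96 := by
      have heq : (∑ m ∈ Finset.range 4, u ^ m / m.factorial)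
          + u ^ 4 * (4 + 1) / (Nat.factorial 4 * 4)
          = 1 + u + u ^ 2 / 2 + u ^ 3 / 6 + 5 * u ^ 4 / 96 := by
        simp [Finset.sum_range_succ, Nat.factorial]
        ring
      calc Real.exp u ≤ _ := hb
        _ = _ := heq
    have hpos : (0 : ℝ) ≤ Real.exp u := (Real.exp_pos u).le
    have h2 : Real.exp (2 * u) = Real.exp u * Real.exp u := by
      rw [two_mul, Real.exp_add]
    have h1u : (0 : ℝ) ≤ 1 - u := by linarith
    have hmm : Real.exp u * Real.exp u ≤ (1 + u + u ^ 2 / 2 + u ^ 3 / 6 + 5 * u ^ 4 / 96) *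
        (1 + u + u ^ 2 / 2 + u ^ 3 / 6 + 5 * u ^ 4 / 96) :=
      mul_le_mul hS hS hpos (by positivity)
    have hstep : (1 - u) * (Real.exp u * Real.exp u) ≤
        (1 - u) * ((1 + u + u ^ 2 / 2 + u ^ 3 / 6 + 5 * u ^ 4 / 96) *
          (1 + u + u ^ 2 / 2 + u ^ 3 / 6 + 5 * u ^ 4 / 96)) :=
      mul_le_mul_of_nonneg_left hmm h1u
    have hpoly : (1 - u) * ((1 + u + u ^ 2 / 2 + u ^ 3 / 6 + 5 * u ^ 4 / 96) *
        (1 + u + u ^ 2 / 2 + u ^ 3 / 6 + 5 * u ^ 4 / 96)) ≤ 1 + u := by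
      nlinarith [pow_nonneg h0 3, pow_nonneg h0 4, pow_nonneg h0 5, pow_nonneg h0 6,
        pow_nonneg h0 7, pow_nonneg h0 8, pow_nonneg h0 9]
    rw [h2]
    linarith
  · nlinarith [Real.exp_pos (2 * u)]

theorem sigmoid_le_one_add_half_gap_mul (a a' : ℝ) (ha : 0 ≤ a) (haa' : a ≤ a') :
    sigmoid a' ≤ (1 + (a' - a) / 2) * sigmoid a := by
  set d := a' - a with hd
  have hd0 : 0 ≤ d := by simp only [hd]; linarith
  have hA : (0 : ℝ) < 1 + Real.exp (-a) := by positivity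
  have hB : (0 : ℝ) < 1 + Real.exp (-a') := by positivity
  have hrw : (1 + d / 2) * sigmoid a = (1 + d / 2) / (1 + Real.exp (-a)) := by
    rw [sigmoid]; ring
  rw [sigmoid, hrw, div_le_div_iff₀ hB hA, one_mul]
  have hAB : Real.exp (-a) = Real.exp d * Real.exp (-a') := by
    rw [← Real.exp_add, hd]; ring_nf
  have hBle : Real.exp (-a') ≤ Real.exp (-d) := Real.exp_le_exp.mpr (by linarith)
  have hinv : Real.exp d * Real.exp (-d) = 1 := by
    rw [← Real.exp_add]; simp
  have hlow : 1 + d ≤ Real.exp d := by linarith [Real.add_one_le_exp d]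
  have hkey : (1 - d / 2) * Real.exp d ≤ 1 + d / 2 := by
    have h := aux_key (d / 2) (by linarith)
    have h2 : 2 * (d / 2) = d := by ring
    rwa [h2] at h
  have hDpos : (0 : ℝ) < Real.exp (-d) := Real.exp_pos _
  have hcoef : 0 ≤ Real.exp d - 1 - d / 2 := by linarith
  have step1 : (Real.exp d - 1 - d / 2) * Real.exp (-a') ≤
      (Real.exp d - 1 - d / 2) * Real.exp (-d) :=
    mul_le_mul_of_nonneg_left hBle hcoef
  have step2 : (Real.exp d - 1 - d / 2) * Real.exp (-d) ≤ d / 2 := by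
    nlinarith [mul_le_mul_of_nonneg_right hkey hDpos.le, hinv]
  rw [hAB]
  nlinarith [step1, step2]
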